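/- Let G be an m×n matrix over a finite field F_q with rows g^1, …, g^m, let k ≤ m, Γ ∈ F_q^n, τ ∈ (F_q ∖ {0})^k, and ℓ ≥ 2. If G has the ℓ-orthogonality property with respect to (Γ, τ), then for every c ∈ F_q^m with Σ_{a=1}^m c_a g^a = 0 one has c_A = 0 for all A ∈ [k]. In particular, the first k rows g^1, …, g^k are linearly independent and their span intersects the span of g^{k+1}, …, g^m only in 0. -/

import Mathlib

/-- `G` (with rows `g 1, …, g m`) has the `ℓ`-orthogonality property with respect to
`(Γ, τ)`: for all `a_1, …, a_ℓ ∈ [m]`, `∑ i, Γ i * g (a 1) i * ⋯ * g (a ℓ) i` equals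
`τ A` when `a_1 = ⋯ = a_ℓ = A` for some `A ∈ [k]`, and `0` otherwise. -/
def OrthoProp {F : Type*} [Field F] {m n k : ℕ} (hk : k ≤ m)
    (g : Fin m → Fin n → F) (Γ : Fin n → F) (τ : Fin k → F) (ℓ : ℕ) : Prop :=
  ∀ a : Fin ℓ → Fin m,
    (∀ A : Fin k, (∀ j, a j = Fin.castLE hk A) →
      ∑ i, Γ i * ∏ j, g (a j) i = τ A) ∧
    ((¬ ∃ A : Fin k, ∀ j, a j = Fin.castLE hk A) →
      ∑ i, Γ i * ∏ j, g (a j) i = 0)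

/-- The family `Γ A`, `A ∈ [k]`, witnesses the addressable `ℓ`-orthogonality property
of `G` with respect to `τ`: for each `A ∈ [k]` and all `a_1, …, a_ℓ ∈ [m]`,
`∑ i, Γ A i * g (a 1) i * ⋯ * g (a ℓ) i` equals `τ A` when `a_1 = ⋯ = a_ℓ = A`,
and `0` otherwise. -/
def AddrWitness {F : Type*} [Field F] {m n k : ℕ} (hk : k ≤ m)
    (g : Fin m → Fin n → F) (τ : Fin k → F) (ℓ : ℕ)
    (Γ : Fin k → Fin n → F) : Prop :=
  ∀ A : Fin k, ∀ a : Fin ℓ → Fin m,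
    ((∀ j, a j = Fin.castLE hk A) →
      ∑ i, Γ A i * ∏ j, g (a j) i = τ A) ∧
    ((¬ ∀ j, a j = Fin.castLE hk A) →
      ∑ i, Γ A i * ∏ j, g (a j) i = 0)


theorem key (F : Type*) [Field F] (m n k ℓ : ℕ) (hk : k ≤ m)
    (g : Fin m → Fin n → F) (Γ : Fin n → F) (τ : Fin k → F)
    (hτ : ∀ A, τ A ≠ 0)
    (hG : ∀ a : Fin (ℓ + 2) → Fin m,
      (∀ A : Fin k, (∀ j, a j = Fin.castLE hk A) →
        ∑ i, Γ i * ∏ j, g (a j) i = τ A) ∧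
      ((¬ ∃ A : Fin k, ∀ j, a j = Fin.castLE hk A) →
        ∑ i, Γ i * ∏ j, g (a j) i = 0))
    (c : Fin m → F) (hc : ∑ a, c a • g a = 0) (A : Fin k) :
    c (Fin.castLE hk A) = 0 := by
  set A' := Fin.castLE hk A with hA'
  have hci : ∀ i, ∑ a, c a * g a i = 0 := by
    intro i
    have := congrFun hc i
    simpa using this
  -- tuple with first entry a0, rest A'
  set t : Fin m → Fin (ℓ + 2) → Fin m := fun a0 => Fin.cons a0 (fun _ => A') with ht
  have hS : ∀ a0, ∑ i, Γ i * ∏ j, g (t a0 j) i = if a0 = A' then τ A else 0 := by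
    intro a0
    by_cases h : a0 = A'
    · rw [if_pos h]
      refine (hG (t a0)).1 A ?_
      intro j
      refine Fin.cases ?_ ?_ j <;> simp [ht, h, hA']
    · rw [if_neg h]
      refine (hG (t a0)).2 ?_
      rintro ⟨B, hB⟩
      have h0 := hB 0
      have h1 := hB 1
      simp [ht] at h0 h1
      exact h (h0.trans (h1 ▸ rfl))
  have hT : ∑ a0, c a0 * ∑ i, Γ i * ∏ j, g (t a0 j) i = c A' * τ A := by
    rw [Finset.sum_eq_single A']
    · rw [hS, if_pos rfl]
    · intro b _ hb
      rw [hS, if_neg hb, mul_zero]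
    · intro h
      exact absurd (Finset.mem_univ A') h
  have hT0 : ∑ a0, c a0 * ∑ i, Γ i * ∏ j, g (t a0 j) i = 0 := by
    have hprod : ∀ a0 i, ∏ j, g (t a0 j) i = g a0 i * (g A' i) ^ (ℓ + 1) := by
      intro a0 i
      rw [ht]
      rw [Fin.prod_univ_succ]
      simp
    calc ∑ a0, c a0 * ∑ i, Γ i * ∏ j, g (t a0 j) i
        = ∑ a0, ∑ i, c a0 * (Γ i * (g a0 i * (g A' i) ^ (ℓ + 1))) := by
          refine Finset.sum_congr rfl fun a0 _ => ?_
          rw [Finset.mul_sum]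
          exact Finset.sum_congr rfl fun i _ => by rw [hprod]
      _ = ∑ i, ∑ a0, c a0 * (Γ i * (g a0 i * (g A' i) ^ (ℓ + 1))) := Finset.sum_comm
      _ = ∑ i, (Γ i * (g A' i) ^ (ℓ + 1)) * ∑ a0, c a0 * g a0 i := by
          refine Finset.sum_congr rfl fun i _ => ?_
          rw [Finset.mul_sum]
          exact Finset.sum_congr rfl fun a0 _ => by ring
      _ = 0 := by simp [hci]
  have := hT0.symm.trans hT
  rcases mul_eq_zero.1 this.symm with h | h
  · exact h
  · exact absurd h (hτ A)

/-- If `G` has the `ℓ`-orthogonality property with respect to `(Γ, τ)`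
(`ℓ ≥ 2`), then every linear relation `∑ a, c a • g a = 0` among the rows has
`c A = 0` for all `A ∈ [k]`. In particular, the first `k` rows are linearly
independent and their span meets the span of the remaining rows only in `0`. -/
theorem stmt8 (F : Type*) [Field F] [Fintype F] (m n k ℓ : ℕ) (hk : k ≤ m)
    (hℓ : 2 ≤ ℓ) (g : Fin m → Fin n → F) (Γ : Fin n → F) (τ : Fin k → F)
    (hτ : ∀ A, τ A ≠ 0) (hG : OrthoProp hk g Γ τ ℓ) :
    (∀ c : Fin m → F, ∑ a, c a • g a = 0 → ∀ A : Fin k, c (Fin.castLE hk A) = 0) ∧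
    LinearIndependent F (fun A : Fin k => g (Fin.castLE hk A)) ∧
    Submodule.span F (Set.range fun A : Fin k => g (Fin.castLE hk A)) ⊓
        Submodule.span F
          (Set.range fun b : Fin (m - k) =>
            g ⟨k + (b : ℕ), by have := b.isLt; omega⟩) = ⊥ := by
  obtain ⟨ℓ', rfl⟩ : ∃ ℓ', ℓ = ℓ' + 2 := ⟨ℓ - 2, by omega⟩
  have part1 : ∀ c : Fin m → F, ∑ a, c a • g a = 0 →
      ∀ A : Fin k, c (Fin.castLE hk A) = 0 :=
    fun c hc A => key F m n k ℓ' hk g Γ τ hτ hG c hc A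
  have himg : ∀ a : Fin m,
      a ∈ Finset.image (Fin.castLE hk) Finset.univ ↔ (a : ℕ) < k := by
    intro a
    simp only [Finset.mem_image, Finset.mem_univ, true_and]
    constructor
    · rintro ⟨B, rfl⟩; exact B.isLt
    · intro h; exact ⟨⟨a, h⟩, Fin.ext rfl⟩
  have hinj : Function.Injective (Fin.castLE hk) := Fin.castLE_injective hk
  -- generic splitting lemma for sums
  have hsum : ∀ c : Fin m → F,
      ∑ a, c a • g a = (∑ A : Fin k, c (Fin.castLE hk A) • g (Fin.castLE hk A)) +
        ∑ b : Fin (m - k), c ⟨k + (b : ℕ), by have := b.isLt; omega⟩ •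
          g ⟨k + (b : ℕ), by have := b.isLt; omega⟩ := by
    intro c
    set i2 : Fin (m - k) → Fin m := fun b => ⟨k + (b : ℕ), by have := b.isLt; omega⟩ with hi2
    have hinj2 : Function.Injective i2 := by
      intro b1 b2 h
      apply Fin.ext
      have : k + (b1 : ℕ) = k + (b2 : ℕ) := congrArg Fin.val h
      omega
    have hf1 : Finset.univ.filter (fun a : Fin m => (a : ℕ) < k) =
        Finset.image (Fin.castLE hk) Finset.univ := by
      ext a
      simp [himg a]
    have hf2 : Finset.univ.filter (fun a : Fin m => ¬ (a : ℕ) < k) =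
        Finset.image i2 Finset.univ := by
      ext a
      simp only [Finset.mem_filter, Finset.mem_univ, true_and, Finset.mem_image, hi2]
      constructor
      · intro h
        refine ⟨⟨(a : ℕ) - k, by have := a.isLt; omega⟩, Fin.ext ?_⟩
        simp; omega
      · rintro ⟨b, rfl⟩; simp
    rw [← Finset.sum_filter_add_sum_filter_not Finset.univ (fun a : Fin m => (a : ℕ) < k),
      hf1, hf2, Finset.sum_image (fun x _ y _ h => hinj h),
      Finset.sum_image (fun x _ y _ h => hinj2 h)]
  refine ⟨part1, ?_, ?_⟩
  · rw [Fintype.linearIndependent_iff]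
    intro d hd A
    set c : Fin m → F := fun a => if h : (a : ℕ) < k then d ⟨a, h⟩ else 0 with hcdef
    have hc1 : ∀ A : Fin k, c (Fin.castLE hk A) = d A := by
      intro B
      simp only [hcdef]
      rw [dif_pos (show ((Fin.castLE hk B : Fin m) : ℕ) < k from B.isLt)]
      exact congrArg d (Fin.ext rfl)
    have hc2 : ∑ a, c a • g a = 0 := by
      rw [hsum c]
      have h2 : ∀ b : Fin (m - k),
          c ⟨k + (b : ℕ), by have := b.isLt; omega⟩ = 0 := by
        intro b
        simp only [hcdef]
        rw [dif_neg (by simp)]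
      simp only [h2, zero_smul, Finset.sum_const_zero, add_zero]
      rw [← hd]
      exact Finset.sum_congr rfl fun B _ => by rw [hc1]
    have := part1 c hc2 A
    rwa [hc1] at this
  · rw [eq_bot_iff]
    rintro x hx
    rw [Submodule.mem_inf] at hx
    obtain ⟨hx1, hx2⟩ := hx
    rw [Submodule.mem_span_range_iff_exists_fun] at hx1 hx2
    obtain ⟨d, hd⟩ := hx1
    obtain ⟨e, he⟩ := hx2
    set c : Fin m → F := fun a =>
      if h : (a : ℕ) < k then d ⟨a, h⟩
      else - e ⟨(a : ℕ) - k, by have := a.isLt; omega⟩ with hcdef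
    have hc1 : ∀ B : Fin k, c (Fin.castLE hk B) = d B := by
      intro B
      simp only [hcdef]
      rw [dif_pos (show ((Fin.castLE hk B : Fin m) : ℕ) < k from B.isLt)]
      exact congrArg d (Fin.ext rfl)
    have hc2 : ∀ b : Fin (m - k),
        c ⟨k + (b : ℕ), by have := b.isLt; omega⟩ = - e b := by
      intro b
      simp only [hcdef]
      rw [dif_neg (by simp)]
      congr 1
      apply congrArg
      apply Fin.ext
      simp
    have hc0 : ∑ a, c a • g a = 0 := by
      rw [hsum c]
      have h1 : (∑ A : Fin k, c (Fin.castLE hk A) • g (Fin.castLE hk A)) = x := by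
        rw [← hd]; exact Finset.sum_congr rfl fun B _ => by rw [hc1]
      have h2 : (∑ b : Fin (m - k), c ⟨k + (b : ℕ), by have := b.isLt; omega⟩ •
          g ⟨k + (b : ℕ), by have := b.isLt; omega⟩) = - x := by
        rw [← he, ← Finset.sum_neg_distrib]
        exact Finset.sum_congr rfl fun b _ => by rw [hc2, neg_smul]
      rw [h1, h2, add_neg_cancel]
    have hdz : ∀ B : Fin k, d B = 0 := by
      intro B
      have := part1 c hc0 B
      rwa [hc1] at this
    rw [Submodule.mem_bot, ← hd]
    simp [hdz]
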